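/- Let p : Fin k → ℝ³ satisfy ⟨p j, p j⟩ = (ℓ j)² with ℓ j > 0, ∑ j, p j = 0, and suppose the p j are not all collinear. Then the kernel of the skew-symmetric form ω_p(t, t') = ∑_j det[t j, t' j, p j]/(ℓ j)² restricted to the tangent space T = {t : ⟨t j, p j⟩ = 0 ∀j, ∑ t j = 0} equals exactly the set {j ↦ a (p j) : a skew-symmetric linear map on ℝ³}, which is 3-dimensional. -/

import Mathlib

open scoped InnerProductSpace

/-! ### Auxiliary lemmas on the cross product in `ℝ³` -/

def cr (u v : Fin 3 → ℝ) : Fin 3 → ℝ :=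
  ![u 1 * v 2 - u 2 * v 1, u 2 * v 0 - u 0 * v 2, u 0 * v 1 - u 1 * v 0]

/-- cross with `u` as a linear map on Euclidean space -/
def crL (u : EuclideanSpace ℝ (Fin 3)) :
    EuclideanSpace ℝ (Fin 3) →ₗ[ℝ] EuclideanSpace ℝ (Fin 3) where
  toFun v := WithLp.toLp 2 (cr u v : Fin 3 → ℝ)
  map_add' v w := by ext m; fin_cases m <;> simp [cr] <;> ring
  map_smul' c v := by ext m; fin_cases m <;> simp [cr] <;> ring

lemma inner3 (x y : EuclideanSpace ℝ (Fin 3)) :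
    ⟪x, y⟫_ℝ = x 0 * y 0 + x 1 * y 1 + x 2 * y 2 := by
  simp [PiLp.inner_apply, Fin.sum_univ_three, RCLike.inner_apply]
  ring

lemma det3 (u v w : Fin 3 → ℝ) :
    Matrix.det (Matrix.transpose (Matrix.of ![u, v, w])) =
      u 0 * (v 1 * w 2 - v 2 * w 1) - v 0 * (u 1 * w 2 - u 2 * w 1)
        + w 0 * (u 1 * v 2 - u 2 * v 1) := by
  rw [Matrix.det_transpose, Matrix.det_fin_three]
  simp [Matrix.of_apply]
  ring

lemma crL_skew (x v w : EuclideanSpace ℝ (Fin 3)) :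
    ⟪crL x v, w⟫_ℝ + ⟪v, crL x w⟫_ℝ = 0 := by
  rw [inner3, inner3]
  show cr x v 0 * w 0 + cr x v 1 * w 1 + cr x v 2 * w 2
    + (v 0 * cr x w 0 + v 1 * cr x w 1 + v 2 * cr x w 2) = 0
  simp [cr]; ring

lemma crL_add_left (u u' v : EuclideanSpace ℝ (Fin 3)) :
    crL (u + u') v = crL u v + crL u' v := by
  ext m; fin_cases m <;> simp [crL, cr] <;> ring

lemma crL_smul_left (c : ℝ) (u v : EuclideanSpace ℝ (Fin 3)) :
    crL (c • u) v = c • crL u v := by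
  ext m; fin_cases m <;> simp [crL, cr] <;> ring

lemma crL_self (q : EuclideanSpace ℝ (Fin 3)) : crL q q = 0 := by
  ext m; fin_cases m <;> simp [crL, cr] <;> ring

lemma detI1 (v t' q : EuclideanSpace ℝ (Fin 3)) :
    Matrix.det (Matrix.transpose (Matrix.of ![((crL v q : EuclideanSpace ℝ (Fin 3)) : Fin 3 → ℝ),
        (t' : Fin 3 → ℝ), (q : Fin 3 → ℝ)])) =
      ⟪v, t'⟫_ℝ * ⟪q, q⟫_ℝ - ⟪v, q⟫_ℝ * ⟪t', q⟫_ℝ := by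
  rw [det3]
  show cr v q 0 * (t' 1 * q 2 - t' 2 * q 1) - t' 0 * (cr v q 1 * q 2 - cr v q 2 * q 1)
      + q 0 * (cr v q 1 * t' 2 - cr v q 2 * t' 1) = _
  simp only [inner3, cr]
  simp only [Matrix.cons_val_zero, Matrix.cons_val_one, Matrix.head_cons,
    Matrix.cons_val_two, Matrix.tail_cons]
  ring

lemma crI2 (q t : EuclideanSpace ℝ (Fin 3)) :
    crL (crL q t) q = ⟪q, q⟫_ℝ • t - ⟪q, t⟫_ℝ • q := by
  have key : ∀ m : Fin 3, cr (cr q t) q m = ⟪q, q⟫_ℝ * t m - ⟪q, t⟫_ℝ * q m := by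
    intro m
    fin_cases m <;>
      · simp only [inner3]
        simp [cr, Fin.sum_univ_three]
        ring
  ext m
  exact key m

lemma detI3 (t t' q : EuclideanSpace ℝ (Fin 3)) :
    Matrix.det (Matrix.transpose (Matrix.of ![(t : Fin 3 → ℝ), (t' : Fin 3 → ℝ),
        (q : Fin 3 → ℝ)])) = ⟪crL q t, t'⟫_ℝ := by
  rw [det3, inner3]
  show _ = cr q t 0 * t' 0 + cr q t 1 * t' 1 + cr q t 2 * t' 2
  simp [cr]
  ring

lemma crL_inner_self (v q : EuclideanSpace ℝ (Fin 3)) :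
    ⟪crL v q, q⟫_ℝ = 0 := by
  rw [inner3]
  show cr v q 0 * q 0 + cr v q 1 * q 1 + cr v q 2 * q 2 = 0
  simp [cr]
  ring

lemma eucl_decomp (v : EuclideanSpace ℝ (Fin 3)) :
    v = v 0 • EuclideanSpace.single (0:Fin 3) (1:ℝ)
      + v 1 • EuclideanSpace.single (1:Fin 3) (1:ℝ)
      + v 2 • EuclideanSpace.single (2:Fin 3) (1:ℝ) := by
  ext m
  fin_cases m <;> simp [EuclideanSpace.single_apply]

lemma skew_eq_cross (a : EuclideanSpace ℝ (Fin 3) →ₗ[ℝ] EuclideanSpace ℝ (Fin 3))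
    (ha : ∀ v w, ⟪a v, w⟫_ℝ + ⟪v, a w⟫_ℝ = 0) :
    ∃ x, a = crL x := by
  set e : Fin 3 → EuclideanSpace ℝ (Fin 3) := fun i => EuclideanSpace.single i (1:ℝ)
  have hA : ∀ i j : Fin 3, (a (e i)) j + (a (e j)) i = 0 := by
    intro i j
    have := ha (e i) (e j)
    fin_cases i <;> fin_cases j <;>
      simpa [inner3, e, EuclideanSpace.single_apply, Fin.val_eq_val] using this
  set x : EuclideanSpace ℝ (Fin 3) :=
    WithLp.toLp 2 (![(a (e 1)) 2, (a (e 2)) 0, (a (e 0)) 1] : Fin 3 → ℝ) with hx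
  refine ⟨x, ?_⟩
  have hbasis : ∀ i, a (e i) = crL x (e i) := by
    intro i
    ext m
    fin_cases i <;> fin_cases m <;>
      simp [crL, cr, e, hx, EuclideanSpace.single_apply] <;>
      linarith [hA 0 0, hA 1 1, hA 2 2, hA 0 1, hA 0 2, hA 1 2]
  apply LinearMap.ext
  intro v
  have hv := eucl_decomp v
  rw [hv]
  simp only [map_add, map_smul]
  rw [show EuclideanSpace.single (0:Fin 3) (1:ℝ) = e 0 from rfl,
    show EuclideanSpace.single (1:Fin 3) (1:ℝ) = e 1 from rfl,
    show EuclideanSpace.single (2:Fin 3) (1:ℝ) = e 2 from rfl]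
  rw [hbasis 0, hbasis 1, hbasis 2]

lemma cross_zero_collinear (v q : EuclideanSpace ℝ (Fin 3)) (hv : v ≠ 0)
    (h : crL v q = 0) : ∃ c : ℝ, q = c • v := by
  have h0 : cr v q 0 = 0 := congrFun (congrArg WithLp.ofLp h) 0
  have h1 : cr v q 1 = 0 := congrFun (congrArg WithLp.ofLp h) 1
  have h2 : cr v q 2 = 0 := congrFun (congrArg WithLp.ofLp h) 2
  simp only [cr, Matrix.cons_val_zero, Matrix.cons_val_one, Matrix.head_cons,
    Matrix.cons_val_two, Matrix.tail_cons] at h0 h1 h2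
  have hvi : v 0 ≠ 0 ∨ v 1 ≠ 0 ∨ v 2 ≠ 0 := by
    by_contra hc
    push_neg at hc
    apply hv
    ext m; fin_cases m <;> simp [hc.1, hc.2.1, hc.2.2]
  rcases hvi with hi | hi | hi
  · refine ⟨q 0 / v 0, ?_⟩
    ext m
    fin_cases m
    · show q 0 = (q 0 / v 0) * v 0; field_simp
    · show q 1 = (q 0 / v 0) * v 1
      rw [div_mul_eq_mul_div, eq_div_iff hi]; linear_combination h2
    · show q 2 = (q 0 / v 0) * v 2
      rw [div_mul_eq_mul_div, eq_div_iff hi]; linear_combination -h1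
  · refine ⟨q 1 / v 1, ?_⟩
    ext m
    fin_cases m
    · show q 0 = (q 1 / v 1) * v 0
      rw [div_mul_eq_mul_div, eq_div_iff hi]; linear_combination -h2
    · show q 1 = (q 1 / v 1) * v 1; field_simp
    · show q 2 = (q 1 / v 1) * v 2
      rw [div_mul_eq_mul_div, eq_div_iff hi]; linear_combination h0
  · refine ⟨q 2 / v 2, ?_⟩
    ext m
    fin_cases m
    · show q 0 = (q 2 / v 2) * v 0
      rw [div_mul_eq_mul_div, eq_div_iff hi]; linear_combination h1
    · show q 1 = (q 2 / v 2) * v 1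
      rw [div_mul_eq_mul_div, eq_div_iff hi]; linear_combination -h0
    · show q 2 = (q 2 / v 2) * v 2; field_simp

lemma factor_through {V W : Type*} [AddCommGroup V] [Module ℝ V]
    [AddCommGroup W] [Module ℝ W] (f : V →ₗ[ℝ] ℝ) (Φ : V →ₗ[ℝ] W)
    (h : ∀ v, Φ v = 0 → f v = 0) :
    ∃ g : W →ₗ[ℝ] ℝ, ∀ v, f v = g (Φ v) := by
  have hle : LinearMap.ker Φ ≤ LinearMap.ker f := fun v hv => h v hv
  let fbar := (LinearMap.ker Φ).liftQ f hle
  let e := Φ.quotKerEquivRange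
  let g0 : LinearMap.range Φ →ₗ[ℝ] ℝ := fbar.comp (e.symm : LinearMap.range Φ →ₗ[ℝ] _)
  obtain ⟨g, hg⟩ := g0.exists_extend
  refine ⟨g, fun v => ?_⟩
  have h1 : Φ v = (LinearMap.range Φ).subtype ⟨Φ v, LinearMap.mem_range_self Φ v⟩ := rfl
  rw [h1, ← LinearMap.comp_apply, hg]
  have h2 : e ((LinearMap.ker Φ).mkQ v) = ⟨Φ v, LinearMap.mem_range_self Φ v⟩ :=
    Subtype.ext (Φ.quotKerEquivRange_apply_mk v)
  have h3 : e.symm ⟨Φ v, LinearMap.mem_range_self Φ v⟩ = (LinearMap.ker Φ).mkQ v := by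
    rw [← h2, LinearEquiv.symm_apply_apply]
  show f v = fbar (e.symm ⟨Φ v, LinearMap.mem_range_self Φ v⟩)
  rw [h3]
  rfl


noncomputable def Lmap (k : ℕ) (p : Fin k → EuclideanSpace ℝ (Fin 3)) :
    EuclideanSpace ℝ (Fin 3) →ₗ[ℝ] (Fin k → EuclideanSpace ℝ (Fin 3)) where
  toFun v := fun j => crL v (p j)
  map_add' u u' := by funext j; simp [crL_add_left]
  map_smul' c u := by funext j; simp [crL_smul_left]

noncomputable def Phi (k : ℕ) (p : Fin k → EuclideanSpace ℝ (Fin 3)) :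
    (Fin k → EuclideanSpace ℝ (Fin 3)) →ₗ[ℝ] (Fin k → ℝ) × EuclideanSpace ℝ (Fin 3) where
  toFun t' := (fun j => ⟪t' j, p j⟫_ℝ, ∑ j, t' j)
  map_add' a b := by
    have hp : ∀ (y1 y2 : Fin k → ℝ) (z1 z2 : EuclideanSpace ℝ (Fin 3)),
        (y1, z1) + (y2, z2) = (y1 + y2, z1 + z2) := fun _ _ _ _ => rfl
    rw [hp, Prod.mk.injEq]
    constructor
    · funext j
      show ⟪a j + b j, p j⟫_ℝ = ⟪a j, p j⟫_ℝ + ⟪b j, p j⟫_ℝ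
      exact inner_add_left _ _ _
    · rw [← Finset.sum_add_distrib]
      rfl
  map_smul' r a := by
    have hp : ∀ (y : Fin k → ℝ) (z : EuclideanSpace ℝ (Fin 3)),
        r • (y, z) = (r • y, r • z) := fun _ _ => rfl
    rw [RingHom.id_apply, hp, Prod.mk.injEq]
    constructor
    · funext j
      show ⟪r • a j, p j⟫_ℝ = r * ⟪a j, p j⟫_ℝ
      exact real_inner_smul_left _ _ _
    · rw [Finset.smul_sum]
      rfl

noncomputable def fmap (k : ℕ) (x : Fin k → EuclideanSpace ℝ (Fin 3)) :
    (Fin k → EuclideanSpace ℝ (Fin 3)) →ₗ[ℝ] ℝ where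
  toFun t' := ∑ j, ⟪x j, t' j⟫_ℝ
  map_add' a b := by
    rw [← Finset.sum_add_distrib]
    refine Finset.sum_congr rfl fun j _ => ?_
    show ⟪x j, a j + b j⟫_ℝ = _
    exact inner_add_right _ _ _
  map_smul' r a := by
    show ∑ j, ⟪x j, (r • a) j⟫_ℝ = (RingHom.id ℝ) r • ∑ j, ⟪x j, a j⟫_ℝ
    rw [RingHom.id_apply, smul_eq_mul, Finset.mul_sum]
    refine Finset.sum_congr rfl fun j _ => ?_
    show ⟪x j, r • a j⟫_ℝ = _
    exact real_inner_smul_right _ _ _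

/-- At a non-collinear point of the polygon space, the kernel of the
Kapovich–Millson form on the tangent space is exactly the tangent space to the
`SO(3)`-orbit, which is 3-dimensional. -/
theorem KM_form_kernel_eq_orbit_smooth (k : ℕ)
    (p : Fin k → EuclideanSpace ℝ (Fin 3)) (ℓ : Fin k → ℝ)
    (hℓ : ∀ j, 0 < ℓ j)
    (hlen : ∀ j, ⟪p j, p j⟫_ℝ = (ℓ j) ^ 2)
    (hsum : ∑ j, p j = 0)
    (hcol : ¬ ∃ v : EuclideanSpace ℝ (Fin 3), ∀ j, ∃ c : ℝ, p j = c • v)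
    (T : Submodule ℝ (Fin k → EuclideanSpace ℝ (Fin 3)))
    (hT : ∀ t, t ∈ T ↔ ((∀ j, ⟪t j, p j⟫_ℝ = 0) ∧ ∑ j, t j = 0))
    (O : Submodule ℝ (Fin k → EuclideanSpace ℝ (Fin 3)))
    (hO : ∀ t, t ∈ O ↔ ∃ a : EuclideanSpace ℝ (Fin 3) →ₗ[ℝ] EuclideanSpace ℝ (Fin 3),
      (∀ v w : EuclideanSpace ℝ (Fin 3), ⟪a v, w⟫_ℝ + ⟪v, a w⟫_ℝ = 0) ∧
      ∀ j, t j = a (p j)) :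
    (∀ t, (t ∈ T ∧ ∀ t' ∈ T,
        ∑ j, Matrix.det (Matrix.transpose (Matrix.of ![(t j : Fin 3 → ℝ),
          (t' j : Fin 3 → ℝ), (p j : Fin 3 → ℝ)])) / (ℓ j) ^ 2 = 0) ↔ t ∈ O) ∧
    Module.finrank ℝ O = 3 := by
  classical
  have hℓ2 : ∀ j, (ℓ j) ^ 2 ≠ 0 := fun j => pow_ne_zero 2 (ne_of_gt (hℓ j))
  -- `O` is the range of `Lmap k p`
  have hOr : O = LinearMap.range (Lmap k p) := by
    ext t
    rw [hO]
    constructor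
    · rintro ⟨a, hskew, hat⟩
      obtain ⟨x, hx⟩ := skew_eq_cross a hskew
      refine ⟨x, ?_⟩
      funext j
      show crL x (p j) = t j
      rw [← hx]
      exact (hat j).symm
    · rintro ⟨x, rfl⟩
      exact ⟨crL x, fun v w => crL_skew x v w, fun j => rfl⟩
  have hfin : Module.finrank ℝ O = 3 := by
    rw [hOr]
    have hinj : Function.Injective (Lmap k p) := by
      rw [← LinearMap.ker_eq_bot, Submodule.eq_bot_iff]
      intro v hv
      by_contra hv0
      apply hcol
      refine ⟨v, fun j => ?_⟩
      have hLj : crL v (p j) = 0 := congrFun (LinearMap.mem_ker.mp hv) j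
      exact cross_zero_collinear v (p j) hv0 hLj
    rw [LinearMap.finrank_range_of_inj hinj]
    exact finrank_euclideanSpace_fin
  refine ⟨fun t => ⟨?_, ?_⟩, hfin⟩
  · -- kernel ⊆ orbit
    rintro ⟨ht, hw⟩
    rw [hT] at ht
    obtain ⟨htp, hts⟩ := ht
    have hpt : ∀ j, ⟪p j, t j⟫_ℝ = 0 := fun j => by
      rw [real_inner_comm]; exact htp j
    set x : Fin k → EuclideanSpace ℝ (Fin 3) :=
      fun j => (ℓ j ^ 2)⁻¹ • crL (p j) (t j) with hxdef
    have hA : ∀ j, crL (x j) (p j) = t j := by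
      intro j
      show crL ((ℓ j ^ 2)⁻¹ • crL (p j) (t j)) (p j) = t j
      rw [crL_smul_left, crI2, hlen j, hpt j, zero_smul, sub_zero, smul_smul,
        inv_mul_cancel₀ (hℓ2 j), one_smul]
    have hB : ∀ t' ∈ T, ∑ j, ⟪x j, t' j⟫_ℝ = 0 := by
      intro t' ht'
      rw [← hw t' ht']
      refine Finset.sum_congr rfl fun j _ => ?_
      show ⟪(ℓ j ^ 2)⁻¹ • crL (p j) (t j), t' j⟫_ℝ = _
      rw [real_inner_smul_left, ← detI3 (t j) (t' j) (p j), div_eq_inv_mul]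
    obtain ⟨g, hg⟩ := factor_through (fmap k x) (Phi k p) (fun t' h0 => by
      apply hB
      rw [hT]
      have h0f := congrArg Prod.fst h0
      have h0s := congrArg Prod.snd h0
      constructor
      · intro j
        exact congrFun h0f j
      · exact h0s)
    set c : Fin k → ℝ := fun j => g (Pi.single j 1, 0) with hcdef
    set v' : EuclideanSpace ℝ (Fin 3) :=
      WithLp.toLp 2 (fun m => g (0, EuclideanSpace.single m 1) : Fin 3 → ℝ) with hv'def
    have hgw : ∀ w : EuclideanSpace ℝ (Fin 3), g (0, w) = ⟪v', w⟫_ℝ := by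
      intro w
      have harg : ((0 : Fin k → ℝ), w)
          = w 0 • ((0 : Fin k → ℝ), EuclideanSpace.single (0:Fin 3) (1:ℝ))
            + w 1 • ((0 : Fin k → ℝ), EuclideanSpace.single (1:Fin 3) (1:ℝ))
            + w 2 • ((0 : Fin k → ℝ), EuclideanSpace.single (2:Fin 3) (1:ℝ)) := by
        rw [Prod.ext_iff]
        constructor
        · show (0 : Fin k → ℝ) = w 0 • 0 + w 1 • 0 + w 2 • 0
          simp
        · show w = w 0 • EuclideanSpace.single (0:Fin 3) (1:ℝ)
              + w 1 • EuclideanSpace.single (1:Fin 3) (1:ℝ)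
              + w 2 • EuclideanSpace.single (2:Fin 3) (1:ℝ)
          exact eucl_decomp w
      rw [harg, map_add, map_add, map_smul, map_smul, map_smul, inner3]
      show w 0 * g (0, EuclideanSpace.single (0:Fin 3) (1:ℝ))
          + w 1 * g (0, EuclideanSpace.single (1:Fin 3) (1:ℝ))
          + w 2 * g (0, EuclideanSpace.single (2:Fin 3) (1:ℝ))
        = v' 0 * w 0 + v' 1 * w 1 + v' 2 * w 2
      rw [hv'def]
      ring
    have hkey : ∀ j w, ⟪x j, w⟫_ℝ = ⟪w, p j⟫_ℝ * c j + ⟪v', w⟫_ℝ := by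
      intro j w
      have h1 := hg (Pi.single j w)
      have hf : (fmap k x) (Pi.single j w) = ⟪x j, w⟫_ℝ := by
        show ∑ i, ⟪x i, (Pi.single j w : Fin k → EuclideanSpace ℝ (Fin 3)) i⟫_ℝ = _
        rw [Finset.sum_eq_single j]
        · rw [Pi.single_eq_same]
        · intro i _ hij
          rw [Pi.single_eq_of_ne hij, inner_zero_right]
        · intro h; exact absurd (Finset.mem_univ j) h
      have hPhi : (Phi k p) (Pi.single j w) = (Pi.single j (⟪w, p j⟫_ℝ), w) := by
        show ((fun i => ⟪(Pi.single j w : Fin k → EuclideanSpace ℝ (Fin 3)) i, p i⟫_ℝ),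
            ∑ i, (Pi.single j w : Fin k → EuclideanSpace ℝ (Fin 3)) i)
          = (Pi.single j (⟪w, p j⟫_ℝ), w)
        rw [Prod.ext_iff]
        constructor
        · show (fun i => ⟪(Pi.single j w : Fin k → EuclideanSpace ℝ (Fin 3)) i, p i⟫_ℝ)
              = Pi.single j (⟪w, p j⟫_ℝ)
          funext i
          by_cases hij : i = j
          · subst hij
            rw [Pi.single_eq_same, Pi.single_eq_same]
          · rw [Pi.single_eq_of_ne hij, Pi.single_eq_of_ne hij, inner_zero_left]
        · show ∑ i, (Pi.single j w : Fin k → EuclideanSpace ℝ (Fin 3)) i = w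
          rw [Finset.sum_eq_single j]
          · rw [Pi.single_eq_same]
          · intro i _ hij
            rw [Pi.single_eq_of_ne hij]
          · intro h; exact absurd (Finset.mem_univ j) h
      have harg : ((Pi.single j (⟪w, p j⟫_ℝ) : Fin k → ℝ), w)
          = ⟪w, p j⟫_ℝ • ((Pi.single j (1:ℝ) : Fin k → ℝ), (0 : EuclideanSpace ℝ (Fin 3)))
            + ((0 : Fin k → ℝ), w) := by
        rw [Prod.ext_iff]
        constructor
        · show (Pi.single j (⟪w, p j⟫_ℝ) : Fin k → ℝ)
            = ⟪w, p j⟫_ℝ • (Pi.single j (1:ℝ) : Fin k → ℝ) + 0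
          rw [add_zero, ← Pi.single_smul, smul_eq_mul, mul_one]
        · show w = ⟪w, p j⟫_ℝ • (0 : EuclideanSpace ℝ (Fin 3)) + w
          rw [smul_zero, zero_add]
      rw [hf, hPhi, harg, map_add, map_smul, smul_eq_mul, hgw w] at h1
      rw [h1, hcdef]
    have hxj : ∀ j, x j = c j • p j + v' := by
      intro j
      have hall : ∀ w, ⟪x j - (c j • p j + v'), w⟫_ℝ = 0 := by
        intro w
        rw [inner_sub_left, inner_add_left, hkey j w, real_inner_smul_left,
          real_inner_comm (p j) w]
        ring
      have h0 := hall (x j - (c j • p j + v'))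
      rw [inner_self_eq_zero] at h0
      exact sub_eq_zero.mp h0
    rw [hO]
    refine ⟨crL v', fun v w => crL_skew v' v w, fun j => ?_⟩
    rw [← hA j, hxj j, crL_add_left, crL_smul_left, crL_self, smul_zero, zero_add]
  · -- orbit ⊆ kernel
    intro htO
    have htO' := htO
    rw [hOr] at htO'
    obtain ⟨x, hx⟩ := htO'
    have htj : ∀ j, t j = crL x (p j) := fun j => by rw [← hx]; rfl
    have hmemT : t ∈ T := by
      rw [hT]
      constructor
      · intro j
        rw [htj j]
        exact crL_inner_self x (p j)
      · have hsum2 : ∑ j, t j = crL x (∑ j, p j) := by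
          rw [map_sum]
          exact Finset.sum_congr rfl fun j _ => htj j
        rw [hsum2, hsum, map_zero]
    refine ⟨hmemT, fun t' ht' => ?_⟩
    obtain ⟨ht'p, ht's⟩ := (hT t').mp ht'
    have hdet : ∀ j, Matrix.det (Matrix.transpose (Matrix.of ![(t j : Fin 3 → ℝ),
        (t' j : Fin 3 → ℝ), (p j : Fin 3 → ℝ)])) / (ℓ j) ^ 2 = ⟪x, t' j⟫_ℝ := by
      intro j
      have h1 : (t j : Fin 3 → ℝ)
          = ((crL x (p j) : EuclideanSpace ℝ (Fin 3)) : Fin 3 → ℝ) := by rw [htj j]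
      rw [h1, detI1 x (t' j) (p j), hlen j, ht'p j, mul_zero, sub_zero,
        mul_div_assoc, div_self (hℓ2 j), mul_one]
    rw [Finset.sum_congr rfl fun j _ => hdet j, ← inner_sum, ht's, inner_zero_right]
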